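/- Let z₁ ∈ 𝔻 and σ ∈ 𝕋, and define f(ζ) = σ ζ² (1 − conj(z₁) ζ)/(ζ − z₁) for ζ ∈ 𝕋. Then f maps 𝕋 into 𝕋, and f is a sense-preserving circle homeomorphism if and only if |z₁| ≤ 1/3; moreover, f is a circle diffeomorphism if and only if |z₁| < 1/3. -/

import Mathlib

open Complex MeasureTheory intervalIntegral ComplexConjugate

/-- A sense-preserving homeomorphism of the unit circle, described via a continuous
strictly increasing degree-one lift. -/
def CirclePosHomeo (f : ℂ → ℂ) : Prop :=
  ∃ F : ℝ → ℝ, Continuous F ∧ StrictMono F ∧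
    (∀ θ, F (θ + 2 * Real.pi) = F θ + 2 * Real.pi) ∧
    ∀ θ : ℝ, f (Complex.exp (θ * Complex.I)) = Complex.exp (F θ * Complex.I)

/-- A sense-preserving diffeomorphism of the unit circle, described via a `C¹`
degree-one lift with everywhere positive derivative. -/
def CirclePosDiffeo (f : ℂ → ℂ) : Prop :=
  ∃ F : ℝ → ℝ, ContDiff ℝ 1 F ∧ (∀ θ, 0 < deriv F θ) ∧
    (∀ θ, F (θ + 2 * Real.pi) = F θ + 2 * Real.pi) ∧
    ∀ θ : ℝ, f (Complex.exp (θ * Complex.I)) = Complex.exp (F θ * Complex.I)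

section BQAux
open Filter Topology

lemma polar_of_re_pos (v : ℂ) (hv : 0 < v.re) :
    (‖v‖ : ℂ) * Complex.exp (Real.arctan (v.im / v.re) * I) = v := by
  have habs : (0:ℝ) < ‖v‖ := by
    apply norm_pos_iff.mpr; intro h; rw [h] at hv; simp at hv
  set m : ℝ := v.im / v.re with hm
  have h2 : ‖v‖ ^ 2 = v.re ^ 2 + v.im ^ 2 := by
    rw [Complex.sq_norm, Complex.normSq_apply]; ring
  have hsqrt : Real.sqrt (1 + m ^ 2) = ‖v‖ / v.re := by
    rw [show (1:ℝ) + m ^ 2 = (‖v‖ / v.re)^2 by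
      rw [hm, div_pow, div_pow, h2]; field_simp]
    exact Real.sqrt_sq (by positivity)
  rw [show ((Real.arctan m : ℝ) : ℂ) * I = (Real.arctan m) * I from rfl]
  rw [Complex.exp_mul_I]
  rw [show Complex.cos (Real.arctan m) = (Real.cos (Real.arctan m) : ℂ) by
        rw [Complex.ofReal_cos],
      show Complex.sin (Real.arctan m) = (Real.sin (Real.arctan m) : ℂ) by
        rw [Complex.ofReal_sin]]
  rw [Real.cos_arctan, Real.sin_arctan, hsqrt]
  apply Complex.ext
  · push_cast
    simp only [Complex.add_re, Complex.mul_re, Complex.ofReal_re, Complex.ofReal_im,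
      Complex.I_re, Complex.I_im, Complex.mul_im]
    simp only [← Complex.ofReal_div, ← Complex.ofReal_mul, Complex.ofReal_re, Complex.ofReal_im, mul_zero, zero_mul, sub_zero, add_zero, one_div, ← Complex.ofReal_inv]
    field_simp
  · push_cast
    simp only [Complex.add_im, Complex.mul_re, Complex.ofReal_re, Complex.ofReal_im,
      Complex.I_re, Complex.I_im, Complex.mul_im]
    simp only [← Complex.ofReal_div, ← Complex.ofReal_mul, Complex.ofReal_re, Complex.ofReal_im, mul_zero, zero_mul, sub_zero, add_zero, zero_add, one_div, ← Complex.ofReal_inv, Complex.ofReal_re, Complex.ofReal_im]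
    field_simp
    rw [hm]; field_simp

noncomputable def bqU (z₁ : ℂ) (θ : ℝ) : ℂ := conj z₁ * Complex.exp (θ * Complex.I)
noncomputable def bqW (z₁ : ℂ) (θ : ℝ) : ℂ := 1 - bqU z₁ θ
noncomputable def bqg (z₁ : ℂ) (θ : ℝ) : ℝ := Real.arctan ((bqW z₁ θ).im / (bqW z₁ θ).re)
noncomputable def bqG (z₁ σ : ℂ) (θ : ℝ) : ℝ := σ.arg + θ + 2 * bqg z₁ θ
noncomputable def bqD (z₁ : ℂ) (θ : ℝ) : ℝ :=
  1 + 2 * ((‖z₁‖ ^ 2 - (bqU z₁ θ).re) / Complex.normSq (bqW z₁ θ))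

lemma bqU_abs (z₁ : ℂ) (θ : ℝ) : ‖bqU z₁ θ‖ = ‖z₁‖ := by
  rw [bqU, norm_mul, Complex.norm_exp_ofReal_mul_I, Complex.norm_conj, mul_one]

lemma bqU_re_le (z₁ : ℂ) (θ : ℝ) : (bqU z₁ θ).re ≤ ‖z₁‖ := by
  calc (bqU z₁ θ).re ≤ ‖bqU z₁ θ‖ := Complex.re_le_norm _
  _ = ‖z₁‖ := bqU_abs z₁ θ

lemma bqU_sq (z₁ : ℂ) (θ : ℝ) : (bqU z₁ θ).re ^ 2 + (bqU z₁ θ).im ^ 2 = ‖z₁‖ ^ 2 := by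
  have h : ‖bqU z₁ θ‖ ^ 2 = ‖z₁‖ ^ 2 := by rw [bqU_abs]
  rw [← h, Complex.sq_norm, Complex.normSq_apply]; ring

lemma bqW_re_pos {z₁ : ℂ} (hz₁ : ‖z₁‖ < 1) (θ : ℝ) : 0 < (bqW z₁ θ).re := by
  have h := bqU_re_le z₁ θ
  simp only [bqW, Complex.sub_re, Complex.one_re]
  linarith

lemma bqW_normSq_pos {z₁ : ℂ} (hz₁ : ‖z₁‖ < 1) (θ : ℝ) : 0 < Complex.normSq (bqW z₁ θ) := by
  apply Complex.normSq_pos.2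
  intro h
  have := bqW_re_pos hz₁ θ
  rw [h] at this; simp at this

lemma bqW_ne_zero {z₁ : ℂ} (hz₁ : ‖z₁‖ < 1) (θ : ℝ) : bqW z₁ θ ≠ 0 := by
  intro h
  have := bqW_re_pos hz₁ θ
  rw [h] at this; simp at this

lemma bqW_im (z₁ : ℂ) (θ : ℝ) : (bqW z₁ θ).im = -(bqU z₁ θ).im := by
  simp [bqW]

lemma bqW_re (z₁ : ℂ) (θ : ℝ) : (bqW z₁ θ).re = 1 - (bqU z₁ θ).re := by
  simp [bqW]

lemma bqW_normSq (z₁ : ℂ) (θ : ℝ) :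
    Complex.normSq (bqW z₁ θ) = (1 - (bqU z₁ θ).re) ^ 2 + (bqU z₁ θ).im ^ 2 := by
  rw [Complex.normSq_apply, bqW_re, bqW_im]; ring

lemma bqD_eq {z₁ : ℂ} (hz₁ : ‖z₁‖ < 1) (θ : ℝ) :
    bqD z₁ θ = (1 + 3 * ‖z₁‖ ^ 2 - 4 * (bqU z₁ θ).re) / Complex.normSq (bqW z₁ θ) := by
  have h1 := bqW_normSq_pos hz₁ θ
  have h2 := bqU_sq z₁ θ
  have h3 := bqW_normSq z₁ θ
  have hd : (0:ℝ) < (1 - (bqU z₁ θ).re) ^ 2 + (bqU z₁ θ).im ^ 2 := h3 ▸ h1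
  rw [bqD, h3]
  field_simp
  linear_combination h2

lemma bqG_exp {z₁ : ℂ} (hz₁ : ‖z₁‖ < 1) {σ : ℂ} (hσ : ‖σ‖ = 1) (θ : ℝ) :
    σ * Complex.exp (θ * I) ^ 2 * (1 - conj z₁ * Complex.exp (θ * I)) /
      (Complex.exp (θ * I) - z₁) = Complex.exp ((bqG z₁ σ θ : ℝ) * I) := by
  set e : ℂ := Complex.exp (θ * I) with he_def
  have he : e ≠ 0 := Complex.exp_ne_zero _
  have hW : bqW z₁ θ = 1 - conj z₁ * e := rfl
  have hwre := bqW_re_pos hz₁ θ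
  have hw0 := bqW_ne_zero hz₁ θ
  have habsw : (0:ℝ) < ‖bqW z₁ θ‖ := norm_pos_iff.mpr hw0
  have hconj_e : conj e = e⁻¹ := by
    rw [he_def, ← Complex.exp_conj, ← Complex.exp_neg]
    congr 1
    simp [Complex.conj_ofReal]
  have hsub : e - z₁ = e * conj (bqW z₁ θ) := by
    rw [hW, map_sub, map_one, map_mul, Complex.conj_conj, hconj_e]
    field_simp
  have hcw0 : conj (bqW z₁ θ) ≠ 0 := by simpa using hw0
  have hexpg : Complex.exp ((bqg z₁ θ : ℝ) * I) = bqW z₁ θ / (‖bqW z₁ θ‖ : ℂ) := by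
    rw [eq_div_iff (by exact_mod_cast habsw.ne')]
    rw [mul_comm]
    exact polar_of_re_pos _ hwre
  have hσabs : ‖σ‖ = 1 := hσ
  have hexpσ : Complex.exp ((σ.arg : ℝ) * I) = σ := by
    have := Complex.norm_mul_exp_arg_mul_I σ
    rwa [hσabs, Complex.ofReal_one, one_mul] at this
  have hGsplit : ((bqG z₁ σ θ : ℝ) : ℂ) * I
      = (σ.arg : ℝ) * I + ((θ : ℝ) * I + ((bqg z₁ θ : ℝ) * I + (bqg z₁ θ : ℝ) * I)) := by
    rw [bqG]; push_cast; ring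
  rw [hGsplit, Complex.exp_add, Complex.exp_add, Complex.exp_add, hexpσ, ← he_def, hexpg]
  have habs2 : ((‖bqW z₁ θ‖ : ℂ)) * (‖bqW z₁ θ‖ : ℂ)
      = bqW z₁ θ * conj (bqW z₁ θ) := by
    rw [Complex.mul_conj]
    norm_cast
    rw [← Complex.sq_norm]; ring
  rw [hsub, ← hW]
  have habsC : (‖bqW z₁ θ‖ : ℂ) ≠ 0 := by exact_mod_cast habsw.ne'
  field_simp
  linear_combination σ * habs2

lemma bqU_hasDeriv (z₁ : ℂ) (θ : ℝ) : HasDerivAt (bqU z₁) (I * bqU z₁ θ) θ := by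
  have h1 : HasDerivAt (fun t : ℝ => (t : ℂ) * I) I θ := by
    simpa using (Complex.ofRealCLM.hasDerivAt (x := θ)).mul_const I
  have h2 := h1.cexp
  have h3 := h2.const_mul (conj z₁)
  have : conj z₁ * (Complex.exp ((θ:ℂ) * I) * I) = I * bqU z₁ θ := by
    rw [bqU]; ring
  rw [this] at h3
  exact h3

lemma bqG_hasDeriv {z₁ : ℂ} (hz₁ : ‖z₁‖ < 1) (σ : ℂ) (θ : ℝ) :
    HasDerivAt (bqG z₁ σ) (bqD z₁ θ) θ := by
  have hU := bqU_hasDeriv z₁ θ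
  have hW : HasDerivAt (bqW z₁) (-(I * bqU z₁ θ)) θ := by
    have h := (hasDerivAt_const θ (1:ℂ)).sub hU; simp only [zero_sub] at h; exact h
  have hRe : HasDerivAt (fun t => (bqW z₁ t).re) ((-(I * bqU z₁ θ)).re) θ :=
    Complex.reCLM.hasFDerivAt.comp_hasDerivAt θ hW
  have hIm : HasDerivAt (fun t => (bqW z₁ t).im) ((-(I * bqU z₁ θ)).im) θ :=
    Complex.imCLM.hasFDerivAt.comp_hasDerivAt θ hW
  have hApos := bqW_re_pos hz₁ θ
  have hdiv := hIm.div hRe hApos.ne'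
  have harctan := hdiv.arctan
  have hg : HasDerivAt (bqg z₁)
      (1 / (1 + ((bqW z₁ θ).im / (bqW z₁ θ).re) ^ 2) *
        (((-(I * bqU z₁ θ)).im * (bqW z₁ θ).re - (bqW z₁ θ).im * (-(I * bqU z₁ θ)).re) /
          (bqW z₁ θ).re ^ 2)) θ := harctan
  have hG := ((hasDerivAt_const θ (σ.arg)).add (hasDerivAt_id θ)).add (hg.const_mul 2)
  have hval : σ.arg + θ + 2 * bqg z₁ θ = bqG z₁ σ θ := rfl
  have hfun : (fun t => σ.arg + t + 2 * bqg z₁ t) = bqG z₁ σ := rfl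
  change HasDerivAt (bqG z₁ σ) _ θ at hG
  convert hG using 1
  have hnum : (-(I * bqU z₁ θ)).im = -(bqU z₁ θ).re := by simp [Complex.mul_im]
  have hnum2 : (-(I * bqU z₁ θ)).re = (bqU z₁ θ).im := by simp [Complex.mul_re]
  rw [bqD_eq hz₁, bqW_normSq, hnum, hnum2, bqW_re, bqW_im]
  have hsq := bqU_sq z₁ θ
  have hA : (0:ℝ) < 1 - (bqU z₁ θ).re := by
    have := bqW_re_pos hz₁ θ; rwa [bqW_re] at this
  have hden : (0:ℝ) < (1 - (bqU z₁ θ).re) ^ 2 + (bqU z₁ θ).im ^ 2 := by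
    have := bqW_normSq_pos hz₁ θ; rwa [bqW_normSq] at this
  field_simp
  linear_combination (-3) * hsq

lemma bqU_continuous (z₁ : ℂ) : Continuous (bqU z₁) := by
  unfold bqU
  exact continuous_const.mul (Complex.continuous_exp.comp
    (Complex.continuous_ofReal.mul continuous_const))

lemma bqD_continuous {z₁ : ℂ} (hz₁ : ‖z₁‖ < 1) : Continuous (bqD z₁) := by
  unfold bqD
  have hU := bqU_continuous z₁
  have hW : Continuous (bqW z₁) := continuous_const.sub hU
  refine continuous_const.add (continuous_const.mul (Continuous.div ?_ ?_ ?_))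
  · exact continuous_const.sub (Complex.continuous_re.comp hU)
  · exact Complex.continuous_normSq.comp hW
  · exact fun θ => (bqW_normSq_pos hz₁ θ).ne'

lemma bqU_periodic (z₁ : ℂ) (θ : ℝ) : bqU z₁ (θ + 2 * Real.pi) = bqU z₁ θ := by
  unfold bqU
  congr 1
  rw [show ((θ + 2 * Real.pi : ℝ) : ℂ) * I = θ * I + 2 * Real.pi * I by push_cast; ring]
  rw [Complex.exp_add, Complex.exp_two_pi_mul_I, mul_one]

lemma bqG_periodic (z₁ σ : ℂ) (θ : ℝ) :
    bqG z₁ σ (θ + 2 * Real.pi) = bqG z₁ σ θ + 2 * Real.pi := by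
  unfold bqG bqg bqW
  rw [bqU_periodic]
  ring

lemma exp_mul_I_inj {x y : ℝ} (h : Complex.exp ((x:ℝ) * I) = Complex.exp ((y:ℝ) * I)) :
    ∃ n : ℤ, x = y + n * (2 * Real.pi) := by
  obtain ⟨n, hn⟩ := Complex.exp_eq_exp_iff_exists_int.1 h
  refine ⟨n, ?_⟩
  have him := congrArg Complex.im hn
  simpa [Complex.mul_im] using him

lemma lift_unique {F G : ℝ → ℝ} (hF : Continuous F) (hG : Continuous G)
    (h : ∀ θ : ℝ, Complex.exp ((F θ : ℝ) * I) = Complex.exp ((G θ : ℝ) * I)) :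
    ∀ θ, F θ = G θ + (F 0 - G 0) := by
  set H : ℝ → ℝ := fun θ => F θ - G θ with hH
  have hHc : Continuous H := hF.sub hG
  have key : ∀ θ, ∃ n : ℤ, H θ = n * (2 * Real.pi) := by
    intro θ
    obtain ⟨n, hn⟩ := exp_mul_I_inj (h θ)
    exact ⟨n, by rw [hH]; simp; linarith⟩
  have hconst : ∀ θ, H θ = H 0 := by
    intro θ
    by_contra hne
    obtain ⟨n, hn⟩ := key θ
    obtain ⟨n₀, hn₀⟩ := key 0
    have hnn : n ≠ n₀ := by
      intro hh; rw [hh, ← hn₀] at hn; exact hne hn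
    set v : ℝ := min (H 0) (H θ) + Real.pi with hv
    have hπ : (0:ℝ) < Real.pi := Real.pi_pos
    have hdiff : H θ - H 0 = ((n - n₀ : ℤ) : ℝ) * (2 * Real.pi) := by
      rw [hn, hn₀]; push_cast; ring
    have h1 : (1:ℝ) ≤ |((n - n₀ : ℤ) : ℝ)| := by
      exact_mod_cast Int.one_le_abs (sub_ne_zero.2 hnn)
    have hdist : 2 * Real.pi ≤ |H θ - H 0| := by
      rw [hdiff, abs_mul, abs_of_pos (by linarith : (0:ℝ) < 2 * Real.pi)]
      nlinarith
    have hvmem : v ∈ Set.uIcc (H 0) (H θ) := by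
      rcases le_total (H 0) (H θ) with hc | hc
      · rw [Set.uIcc_of_le hc]
        rw [_root_.abs_of_nonneg (sub_nonneg.2 hc)] at hdist
        exact ⟨by rw [hv, min_eq_left hc]; linarith, by rw [hv, min_eq_left hc]; linarith⟩
      · rw [Set.uIcc_of_ge hc]
        rw [_root_.abs_of_nonpos (sub_nonpos.2 hc)] at hdist
        exact ⟨by rw [hv, min_eq_right hc]; linarith, by rw [hv, min_eq_right hc]; linarith⟩
    have := intermediate_value_uIcc (a := (0:ℝ)) (b := θ) (hHc.continuousOn)
    obtain ⟨t, _, ht⟩ := this hvmem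
    obtain ⟨m, hm⟩ := key t
    rw [ht] at hm
    -- v = m * 2π ; v = min + π ; min is k * 2π
    have hmin : ∃ k : ℤ, min (H 0) (H θ) = k * (2 * Real.pi) := by
      rcases le_total (H 0) (H θ) with hc | hc
      · exact ⟨n₀, by rw [min_eq_left hc, hn₀]⟩
      · exact ⟨n, by rw [min_eq_right hc, hn]⟩
    obtain ⟨k, hk⟩ := hmin
    rw [hv, hk] at hm
    have : (2 * (m:ℝ) - 2 * (k:ℝ) - 1) * Real.pi = 0 := by linarith
    have h2 : (2 * (m:ℝ) - 2 * (k:ℝ) - 1) = 0 := by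
      rcases mul_eq_zero.1 this with h | h
      · exact h
      · exact absurd h hπ.ne'
    have : (2 * m - 2 * k - 1 : ℤ) = 0 := by exact_mod_cast h2
    omega
  intro θ
  have := hconst θ
  rw [hH] at this
  simp at this
  linarith

lemma monotone_hasDerivAt_nonneg {F : ℝ → ℝ} {d θ : ℝ} (hm : Monotone F)
    (hd : HasDerivAt F d θ) : 0 ≤ d := by
  have ht := hasDerivAt_iff_tendsto_slope.1 hd
  refine ge_of_tendsto ht ?_
  filter_upwards [self_mem_nhdsWithin] with x hx
  have hx' : x ≠ θ := hx
  rcases lt_or_gt_of_ne hx' with h | h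
  · rw [slope_def_field]
    exact div_nonneg_iff.2 (Or.inr ⟨by simpa using hm h.le, by linarith⟩)
  · rw [slope_def_field]
    exact div_nonneg (by simpa using hm h.le) (by linarith)

lemma exists_gt_of_hasDerivAt_pos {F : ℝ → ℝ} {d c b : ℝ} (hd : HasDerivAt F d c)
    (hpos : 0 < d) (hb : c < b) : ∃ x, x ∈ Set.Ioo c b ∧ F c < F x := by
  have ht := hasDerivAt_iff_tendsto_slope.1 hd
  have hmono : 𝓝[>] c ≤ 𝓝[≠] c :=
    nhdsWithin_mono _ (fun x hx => ne_of_gt hx)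
  have hev : ∀ᶠ x in 𝓝[>] c, 0 < slope F c x :=
    (ht.mono_left hmono).eventually (eventually_gt_nhds hpos)
  have hIoo : ∀ᶠ x in 𝓝[>] c, x ∈ Set.Ioo c b := by
    filter_upwards [Ioo_mem_nhdsGT_of_mem (Set.left_mem_Ico.2 hb)] with x hx
    exact hx
  obtain ⟨x, hx1, hx2⟩ := (hev.and hIoo).exists
  refine ⟨x, hx2, ?_⟩
  rw [slope_def_field] at hx1
  have hxc : 0 < x - c := by have := hx2.1; linarith
  rcases div_pos_iff.1 hx1 with ⟨ha, _⟩ | ⟨_, hb2⟩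
  · linarith
  · linarith

lemma bqU_at_arg {z₁ : ℂ} (hz : z₁ ≠ 0) : bqU z₁ z₁.arg = (‖z₁‖ : ℝ) := by
  have habs : (‖z₁‖ : ℂ) * Complex.exp (z₁.arg * I) = z₁ :=
    Complex.norm_mul_exp_arg_mul_I z₁
  have habs0 : (0:ℝ) < ‖z₁‖ := norm_pos_iff.mpr hz
  rw [bqU]
  have h2 : Complex.exp ((z₁.arg : ℝ) * I) = z₁ / (‖z₁‖ : ℂ) := by
    rw [eq_div_iff (by exact_mod_cast habs0.ne'), mul_comm]
    exact habs
  rw [h2]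
  have hA : (‖z₁‖ : ℂ) ≠ 0 := by exact_mod_cast habs0.ne'
  field_simp
  rw [mul_comm, Complex.mul_conj]
  norm_cast
  rw [Complex.normSq_eq_norm_sq]

lemma bqD_at_arg {z₁ : ℂ} (hz₁ : ‖z₁‖ < 1) (hz : z₁ ≠ 0) :
    bqD z₁ z₁.arg = (1 - 4 * ‖z₁‖ + 3 * ‖z₁‖ ^ 2) / (1 - ‖z₁‖) ^ 2 := by
  have hU := bqU_at_arg hz
  have hre : (bqU z₁ z₁.arg).re = ‖z₁‖ := by rw [hU]; simp
  have him : (bqU z₁ z₁.arg).im = 0 := by rw [hU]; simp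
  rw [bqD_eq hz₁, bqW_normSq, hre, him]
  have h1 : (0:ℝ) < 1 - ‖z₁‖ := by linarith
  rw [show (0:ℝ)^2 = 0 by ring, add_zero]
  congr 1
  ring

lemma bqD_nonneg {z₁ : ℂ} (hz₁ : ‖z₁‖ < 1) (h3 : ‖z₁‖ ≤ 1/3) (θ : ℝ) :
    0 ≤ bqD z₁ θ := by
  rw [bqD_eq hz₁]
  apply div_nonneg _ (Complex.normSq_nonneg _)
  have ha := bqU_re_le z₁ θ
  have hn : (0:ℝ) ≤ ‖z₁‖ := norm_nonneg _
  nlinarith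

lemma bqD_pos {z₁ : ℂ} (hz₁ : ‖z₁‖ < 1) (h3 : ‖z₁‖ < 1/3) (θ : ℝ) :
    0 < bqD z₁ θ := by
  rw [bqD_eq hz₁]
  apply div_pos _ (bqW_normSq_pos hz₁ θ)
  have ha := bqU_re_le z₁ θ
  have hn : (0:ℝ) ≤ ‖z₁‖ := norm_nonneg _
  nlinarith

lemma bqD_zero {z₁ : ℂ} (hz₁ : ‖z₁‖ < 1) (h3 : ‖z₁‖ ≤ 1/3) {θ : ℝ}
    (hD : bqD z₁ θ ≤ 0) : Complex.exp ((θ:ℝ) * I) = 3 * z₁ := by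
  have hn : (0:ℝ) ≤ ‖z₁‖ := norm_nonneg _
  have ha := bqU_re_le z₁ θ
  have hsq := bqU_sq z₁ θ
  rw [bqD_eq hz₁] at hD
  have hNpos := bqW_normSq_pos hz₁ θ
  have hnum : 1 + 3 * ‖z₁‖ ^ 2 - 4 * (bqU z₁ θ).re ≤ 0 := by
    by_contra hcon
    push_neg at hcon
    exact absurd (div_pos hcon hNpos) (not_lt.2 hD)
  -- forces ‖z₁‖ = 1/3 and re = 1/3, im = 0
  have hr : ‖z₁‖ = 1/3 := by nlinarith
  have hre : (bqU z₁ θ).re = 1/3 := by nlinarith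
  have him : (bqU z₁ θ).im = 0 := by nlinarith
  have hU : bqU z₁ θ = ((1:ℝ)/3 : ℝ) := by
    apply Complex.ext
    · simpa using hre
    · simpa using him
  have hz : z₁ ≠ 0 := by
    intro h; rw [h] at hr; simp at hr
  have hcz : conj z₁ ≠ 0 := by simpa using hz
  rw [bqU] at hU
  have h9 : z₁ * conj z₁ = ((1/9 : ℝ) : ℂ) := by
    rw [Complex.mul_conj]
    norm_cast
    rw [Complex.normSq_eq_norm_sq, hr]
    norm_num
  have hmul := congrArg (fun w => z₁ * w) hU
  simp only [← mul_assoc] at hmul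
  rw [h9] at hmul
  push_cast at hmul
  linear_combination 9 * hmul

end BQAux

/-- `f(ζ) = σ ζ² (1 − conj z₁ ζ)/(ζ − z₁)` maps `𝕋` into `𝕋`; it is a
circle homeomorphism iff `|z₁| ≤ 1/3` and a circle diffeomorphism iff `|z₁| < 1/3`. -/
theorem blaschke_quotient_degree_two
    (z₁ : ℂ) (hz₁ : ‖z₁‖ < 1) (σ : ℂ) (hσ : ‖σ‖ = 1)
    (f : ℂ → ℂ) (hf : ∀ ζ : ℂ, f ζ = σ * ζ ^ 2 * (1 - conj z₁ * ζ) / (ζ - z₁)) :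
    (∀ ζ : ℂ, ‖ζ‖ = 1 → ‖f ζ‖ = 1) ∧
    (CirclePosHomeo f ↔ ‖z₁‖ ≤ 1 / 3) ∧
    (CirclePosDiffeo f ↔ ‖z₁‖ < 1 / 3) := by
  have hGd : ∀ θ, HasDerivAt (bqG z₁ σ) (bqD z₁ θ) θ := fun θ => bqG_hasDeriv hz₁ σ θ
  have hGdiff : Differentiable ℝ (bqG z₁ σ) := fun θ => (hGd θ).differentiableAt
  have hGderiv : deriv (bqG z₁ σ) = bqD z₁ := funext fun θ => (hGd θ).deriv
  have hGcont : Continuous (bqG z₁ σ) := hGdiff.continuous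
  have hGper : ∀ θ, bqG z₁ σ (θ + 2*Real.pi) = bqG z₁ σ θ + 2*Real.pi := bqG_periodic z₁ σ
  have hfG : ∀ θ : ℝ, f (Complex.exp ((θ:ℝ) * I)) = Complex.exp ((bqG z₁ σ θ : ℝ) * I) := by
    intro θ; rw [hf]; exact bqG_exp hz₁ hσ θ
  have hrnn : (0:ℝ) ≤ ‖z₁‖ := norm_nonneg _
  have hπ := Real.pi_pos
  refine ⟨?_, ?_, ?_⟩
  · intro ζ hζ
    have hne : ζ - z₁ ≠ 0 := by
      intro h
      rw [sub_eq_zero] at h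
      rw [h] at hζ
      rw [hζ] at hz₁
      exact lt_irrefl 1 hz₁
    have hcc : ζ * conj ζ = 1 := by
      rw [Complex.mul_conj]
      norm_cast
      rw [Complex.normSq_eq_norm_sq, hζ]
      norm_num
    have hkey : ‖1 - conj z₁ * ζ‖ = ‖ζ - z₁‖ := by
      calc ‖1 - conj z₁ * ζ‖ = ‖conj (1 - conj z₁ * ζ)‖ := (RCLike.norm_conj _).symm
        _ = ‖ζ * conj (1 - conj z₁ * ζ)‖ := by rw [norm_mul, hζ, one_mul]
        _ = ‖ζ - z₁‖ := by
            congr 1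
            rw [map_sub, map_one, map_mul, Complex.conj_conj]
            linear_combination (-z₁) * hcc
    rw [hf, norm_div, norm_mul, norm_mul, norm_pow, hσ, hζ, hkey, one_mul, one_pow, one_mul]
    exact div_self (norm_ne_zero_iff.2 hne)
  · constructor
    · rintro ⟨F, hFc, hFm, hFper, hFexp⟩
      have hlift := lift_unique hFc hGcont (fun θ => by rw [← hFexp θ, hfG θ])
      have hGm : Monotone (bqG z₁ σ) := by
        intro x y hxy
        have hx := hlift x; have hy := hlift y
        have := hFm.monotone hxy
        linarith
      by_cases hz : z₁ = 0
      · rw [hz, norm_zero]; norm_num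
      · have h0 := monotone_hasDerivAt_nonneg hGm (hGd z₁.arg)
        rw [bqD_at_arg hz₁ hz] at h0
        have h1r : (0:ℝ) < 1 - ‖z₁‖ := by linarith
        have hd : (0:ℝ) < (1 - ‖z₁‖)^2 := by positivity
        have hnum : 0 ≤ 1 - 4*‖z₁‖ + 3*‖z₁‖^2 := by
          by_contra hcon
          push_neg at hcon
          have := div_neg_of_neg_of_pos hcon hd
          linarith
        by_contra hcon
        push_neg at hcon
        nlinarith [mul_pos (show (0:ℝ) < ‖z₁‖ - 1/3 by linarith) h1r]
    · intro h3
      refine ⟨bqG z₁ σ, hGcont, ?_, hGper, hfG⟩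
      have hmono : Monotone (bqG z₁ σ) :=
        monotone_of_deriv_nonneg hGdiff (by rw [hGderiv]; exact bqD_nonneg hz₁ h3)
      intro x y hxy
      set δ := min (y - x) Real.pi with hδ
      have hδy : δ ≤ y - x := min_le_left _ _
      have hδπ : δ ≤ Real.pi := min_le_right _ _
      have hδpos : 0 < δ := lt_min (by linarith) hπ
      have hcases : 0 < bqD z₁ (x + δ/4) ∨ 0 < bqD z₁ (x + δ/2) := by
        by_contra hcon
        push_neg at hcon
        obtain ⟨h1, h2⟩ := hcon
        have e1 := bqD_zero hz₁ h3 h1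
        have e2 := bqD_zero hz₁ h3 h2
        obtain ⟨n, hn⟩ := exp_mul_I_inj (e1.trans e2.symm)
        have hn' : (n:ℝ) * (2*Real.pi) = -(δ/4) := by linarith
        rcases le_or_gt 0 n with h | h
        · have : (0:ℝ) ≤ (n:ℝ) * (2*Real.pi) := by
            apply mul_nonneg _ (by linarith)
            exact_mod_cast h
          linarith
        · have hn1 : (n:ℝ) ≤ -1 := by exact_mod_cast (by omega : n ≤ -1)
          nlinarith
      rcases hcases with h | h
      · have hcy : x + δ/4 < y := by linarith
        obtain ⟨t, ht, hlt⟩ := exists_gt_of_hasDerivAt_pos (hGd (x + δ/4)) h hcy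
        calc bqG z₁ σ x ≤ bqG z₁ σ (x + δ/4) := hmono (by linarith)
          _ < bqG z₁ σ t := hlt
          _ ≤ bqG z₁ σ y := hmono ht.2.le
      · have hcy : x + δ/2 < y := by linarith
        obtain ⟨t, ht, hlt⟩ := exists_gt_of_hasDerivAt_pos (hGd (x + δ/2)) h hcy
        calc bqG z₁ σ x ≤ bqG z₁ σ (x + δ/2) := hmono (by linarith)
          _ < bqG z₁ σ t := hlt
          _ ≤ bqG z₁ σ y := hmono ht.2.le
  · constructor
    · rintro ⟨F, hF1, hFd, hFper, hFexp⟩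
      have hlift := lift_unique hF1.continuous hGcont (fun θ => by rw [← hFexp θ, hfG θ])
      by_cases hz : z₁ = 0
      · rw [hz, norm_zero]; norm_num
      · have hFeq : F = fun θ => bqG z₁ σ θ + (F 0 - bqG z₁ σ 0) := funext hlift
        have hder : deriv F z₁.arg = bqD z₁ z₁.arg := by
          rw [hFeq]
          exact ((hGd z₁.arg).add_const _).deriv
        have hpos := hFd z₁.arg
        rw [hder, bqD_at_arg hz₁ hz] at hpos
        have h1r : (0:ℝ) < 1 - ‖z₁‖ := by linarith
        have hd : (0:ℝ) < (1 - ‖z₁‖)^2 := by positivity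
        have hnum : 0 < 1 - 4*‖z₁‖ + 3*‖z₁‖^2 := by
          rcases div_pos_iff.1 hpos with ⟨h, _⟩ | ⟨_, hneg⟩
          · exact h
          · linarith
        by_contra hcon
        push_neg at hcon
        nlinarith [mul_nonneg (show (0:ℝ) ≤ 3*‖z₁‖ - 1 by linarith) h1r.le]
    · intro h3
      refine ⟨bqG z₁ σ, ?_, ?_, hGper, hfG⟩
      · exact contDiff_one_iff_deriv.2 ⟨hGdiff, by rw [hGderiv]; exact bqD_continuous hz₁⟩
      · intro θ; rw [hGderiv]; exact bqD_pos hz₁ h3 θ
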